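/- Let Ṽ(ρ) = −2(9ρ⁴ + 102ρ² − 335)/(5+3ρ²)², let f(ρ) = (5+3ρ²)⁻², and let g₁(ρ) = (375 + 2125ρ² + 10425ρ⁴ + 243ρ⁶ + 6144ρ⁵ log(1−ρ) − 6144ρ⁵ log(1+ρ))/(3ρ⁵(5+3ρ²)²). Then both f and g₁ solve the λ = 1 spectral ODE −(1−ρ²)u″(ρ) − (6/ρ − 8ρ)u′(ρ) + (10 − Ṽ(ρ))u(ρ) = 0 on (0,1), and their Wronskian satisfies f′(ρ)g₁(ρ) − f(ρ)g₁′(ρ) = ρ⁻⁶(1−ρ²)⁻¹ for all ρ ∈ (0,1); in particular {f, g₁} is a fundamental system of solutions of this ODE on (0,1). -/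

import Mathlib

/-- The potential `Ṽ`. -/
noncomputable def Vt (ρ : ℝ) : ℝ :=
  -2 * (9 * ρ ^ 4 + 102 * ρ ^ 2 - 335) / (5 + 3 * ρ ^ 2) ^ 2

/-- The solution `f(ρ) = (5+3ρ²)⁻²` of the `λ = 1` spectral ODE. -/
noncomputable def fSol (ρ : ℝ) : ℝ := ((5 + 3 * ρ ^ 2) ^ 2)⁻¹

/-- The second solution `g₁` of the `λ = 1` spectral ODE. -/
noncomputable def gSol (ρ : ℝ) : ℝ :=
  (375 + 2125 * ρ ^ 2 + 10425 * ρ ^ 4 + 243 * ρ ^ 6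
      + 6144 * ρ ^ 5 * Real.log (1 - ρ) - 6144 * ρ ^ 5 * Real.log (1 + ρ)) /
    (3 * ρ ^ 5 * (5 + 3 * ρ ^ 2) ^ 2)

noncomputable def f1 (ρ : ℝ) : ℝ := -12 * ρ / (5 + 3 * ρ ^ 2) ^ 3
noncomputable def f2 (ρ : ℝ) : ℝ := (180 * ρ ^ 2 - 60) / (5 + 3 * ρ ^ 2) ^ 4

lemma hs (ρ : ℝ) : (5 + 3 * ρ ^ 2) ≠ 0 := by positivity

lemma hbase (ρ : ℝ) : HasDerivAt (fun x : ℝ => 5 + 3 * x ^ 2) (6 * ρ) ρ := by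
  have h := ((hasDerivAt_pow 2 ρ).const_mul 3).const_add 5
  refine h.congr_deriv ?_
  push_cast
  ring

lemma hfSol (ρ : ℝ) : HasDerivAt fSol (f1 ρ) ρ := by
  have h := ((hbase ρ).pow 2).inv (pow_ne_zero 2 (hs ρ))
  refine h.congr_deriv ?_
  simp only [Pi.pow_apply, id]
  unfold f1
  field_simp
  ring

lemma hf1 (ρ : ℝ) : HasDerivAt f1 (f2 ρ) ρ := by
  have h := ((hasDerivAt_id ρ).const_mul (-12 : ℝ)).div ((hbase ρ).pow 3)
    (pow_ne_zero 3 (hs ρ))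
  refine h.congr_deriv ?_
  simp only [Pi.pow_apply, id]
  unfold f2
  field_simp
  ring

noncomputable def NN (ρ : ℝ) : ℝ :=
  375 + 2125 * ρ ^ 2 + 10425 * ρ ^ 4 + 243 * ρ ^ 6
    + 6144 * ρ ^ 5 * Real.log (1 - ρ) - 6144 * ρ ^ 5 * Real.log (1 + ρ)

noncomputable def NN1 (ρ : ℝ) : ℝ :=
  4250 * ρ + 41700 * ρ ^ 3 + 1458 * ρ ^ 5
    + 30720 * ρ ^ 4 * Real.log (1 - ρ) - 30720 * ρ ^ 4 * Real.log (1 + ρ)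
    - 6144 * ρ ^ 5 * (1 - ρ)⁻¹ - 6144 * ρ ^ 5 * (1 + ρ)⁻¹

noncomputable def NN2 (ρ : ℝ) : ℝ :=
  4250 + 125100 * ρ ^ 2 + 7290 * ρ ^ 4
    + 122880 * ρ ^ 3 * Real.log (1 - ρ) - 122880 * ρ ^ 3 * Real.log (1 + ρ)
    - 61440 * ρ ^ 4 * (1 - ρ)⁻¹ - 61440 * ρ ^ 4 * (1 + ρ)⁻¹
    - 6144 * ρ ^ 5 * ((1 - ρ) ^ 2)⁻¹ + 6144 * ρ ^ 5 * ((1 + ρ) ^ 2)⁻¹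

noncomputable def DD (ρ : ℝ) : ℝ := 3 * ρ ^ 5 * (5 + 3 * ρ ^ 2) ^ 2
noncomputable def DD1 (ρ : ℝ) : ℝ :=
  15 * ρ ^ 4 * (5 + 3 * ρ ^ 2) ^ 2 + 36 * ρ ^ 6 * (5 + 3 * ρ ^ 2)
noncomputable def DD2 (ρ : ℝ) : ℝ :=
  60 * ρ ^ 3 * (5 + 3 * ρ ^ 2) ^ 2 + 396 * ρ ^ 5 * (5 + 3 * ρ ^ 2) + 216 * ρ ^ 7

noncomputable def g1 (ρ : ℝ) : ℝ := (NN1 ρ * DD ρ - NN ρ * DD1 ρ) / (DD ρ) ^ 2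
noncomputable def g2 (ρ : ℝ) : ℝ :=
  ((NN2 ρ * DD ρ - NN ρ * DD2 ρ) * (DD ρ) ^ 2
      - (NN1 ρ * DD ρ - NN ρ * DD1 ρ) * (2 * DD ρ * DD1 ρ)) / ((DD ρ) ^ 2) ^ 2

section
variable (ρ : ℝ) (h1 : (1 : ℝ) - ρ ≠ 0) (h2 : (1 : ℝ) + ρ ≠ 0)

lemma hs' : (5 + 3 * ρ ^ 2 : ℝ) ≠ 0 := by positivity

lemma hbase' : HasDerivAt (fun x : ℝ => 5 + 3 * x ^ 2) (6 * ρ) ρ := by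
  have h := ((hasDerivAt_pow 2 ρ).const_mul 3).const_add 5
  refine h.congr_deriv ?_
  push_cast; ring

lemma hm1 : HasDerivAt (fun x : ℝ => 1 - x) (-1) ρ := by
  simpa using (hasDerivAt_id ρ).const_sub 1

lemma hp1 : HasDerivAt (fun x : ℝ => 1 + x) 1 ρ := by
  simpa using (hasDerivAt_id ρ).const_add 1

include h1 in
lemma hL1 : HasDerivAt (fun x : ℝ => Real.log (1 - x)) (-(1 - ρ)⁻¹) ρ := by
  have h := (hm1 ρ).log h1
  convert h using 1
  field_simp

include h2 in
lemma hL2 : HasDerivAt (fun x : ℝ => Real.log (1 + x)) ((1 + ρ)⁻¹) ρ := by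
  have h := (hp1 ρ).log h2
  convert h using 1
  field_simp

include h1 in
lemma hI1 : HasDerivAt (fun x : ℝ => (1 - x)⁻¹) (((1 - ρ) ^ 2)⁻¹) ρ := by
  have h := (hm1 ρ).inv h1
  refine h.congr_deriv ?_
  field_simp

include h2 in
lemma hI2 : HasDerivAt (fun x : ℝ => (1 + x)⁻¹) (-((1 + ρ) ^ 2)⁻¹) ρ := by
  have h := (hp1 ρ).inv h2
  refine h.congr_deriv ?_
  field_simp

include h1 h2 in
lemma hNN : HasDerivAt NN (NN1 ρ) ρ := by
  unfold NN
  have h := (((((hasDerivAt_const ρ (375 : ℝ)).add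
      ((hasDerivAt_pow 2 ρ).const_mul 2125)).add
      ((hasDerivAt_pow 4 ρ).const_mul 10425)).add
      ((hasDerivAt_pow 6 ρ).const_mul 243)).add
      (((hasDerivAt_pow 5 ρ).const_mul 6144).mul (hL1 ρ h1))).sub
      (((hasDerivAt_pow 5 ρ).const_mul 6144).mul (hL2 ρ h2))
  refine h.congr_deriv ?_
  unfold NN1
  push_cast
  field_simp
  ring

include h1 h2 in
lemma hNN1 : HasDerivAt NN1 (NN2 ρ) ρ := by
  unfold NN1
  have h := (((((((hasDerivAt_id ρ).const_mul (4250 : ℝ)).add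
      ((hasDerivAt_pow 3 ρ).const_mul 41700)).add
      ((hasDerivAt_pow 5 ρ).const_mul 1458)).add
      (((hasDerivAt_pow 4 ρ).const_mul 30720).mul (hL1 ρ h1))).sub
      (((hasDerivAt_pow 4 ρ).const_mul 30720).mul (hL2 ρ h2))).sub
      (((hasDerivAt_pow 5 ρ).const_mul 6144).mul (hI1 ρ h1))).sub
      (((hasDerivAt_pow 5 ρ).const_mul 6144).mul (hI2 ρ h2))
  refine h.congr_deriv ?_
  unfold NN2
  push_cast
  field_simp
  ring

lemma hDD : HasDerivAt DD (DD1 ρ) ρ := by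
  unfold DD
  have h := ((hasDerivAt_pow 5 ρ).const_mul 3).mul ((hbase' ρ).pow 2)
  refine h.congr_deriv ?_
  simp only [Pi.pow_apply, id]
  unfold DD1
  push_cast
  ring

lemma hDD1 : HasDerivAt DD1 (DD2 ρ) ρ := by
  unfold DD1
  have h := (((hasDerivAt_pow 4 ρ).const_mul 15).mul ((hbase' ρ).pow 2)).add
      (((hasDerivAt_pow 6 ρ).const_mul 36).mul (hbase' ρ))
  refine h.congr_deriv ?_
  simp only [Pi.pow_apply, id]
  unfold DD2
  push_cast
  ring

omit h1 h2 in
lemma hDDne (h0 : ρ ≠ 0) : DD ρ ≠ 0 := by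
  unfold DD
  have := hs' ρ
  positivity

include h1 h2 in
lemma hgSol (h0 : ρ ≠ 0) : HasDerivAt gSol (g1 ρ) ρ := by
  have h := (hNN ρ h1 h2).div (hDD ρ) (hDDne ρ h0)
  exact h

include h1 h2 in
lemma hg1 (h0 : ρ ≠ 0) : HasDerivAt g1 (g2 ρ) ρ := by
  have hM : HasDerivAt (fun x => NN1 x * DD x - NN x * DD1 x)
      (NN2 ρ * DD ρ + NN1 ρ * DD1 ρ - (NN1 ρ * DD1 ρ + NN ρ * DD2 ρ)) ρ :=
    ((hNN1 ρ h1 h2).mul (hDD ρ)).sub ((hNN ρ h1 h2).mul (hDD1 ρ))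
  have hD2 : HasDerivAt (fun x => (DD x) ^ 2) (2 * DD ρ * DD1 ρ) ρ := by
    have h := (hDD ρ).pow 2
    refine h.congr_deriv ?_
    push_cast; ring
  have h := hM.div hD2 (pow_ne_zero 2 (hDDne ρ h0))
  refine h.congr_deriv ?_
  unfold g2
  ring_nf

end


set_option maxHeartbeats 1600000 in
/-- Both `f` and `g₁` solve the `λ = 1` spectral ODE on `(0,1)` and their
Wronskian is `f′g₁ − f g₁′ = ρ⁻⁶(1−ρ²)⁻¹`; in particular, they form a
fundamental system. -/
theorem stmt_10 :
    (∀ ρ ∈ Set.Ioo (0 : ℝ) 1,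
      -(1 - ρ ^ 2) * deriv (deriv fSol) ρ - (6 / ρ - 8 * ρ) * deriv fSol ρ
        + (10 - Vt ρ) * fSol ρ = 0) ∧
    (∀ ρ ∈ Set.Ioo (0 : ℝ) 1,
      -(1 - ρ ^ 2) * deriv (deriv gSol) ρ - (6 / ρ - 8 * ρ) * deriv gSol ρ
        + (10 - Vt ρ) * gSol ρ = 0) ∧
    (∀ ρ ∈ Set.Ioo (0 : ℝ) 1,
      deriv fSol ρ * gSol ρ - fSol ρ * deriv gSol ρ
        = (ρ ^ 6)⁻¹ * (1 - ρ ^ 2)⁻¹) := by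
  have hdf : deriv fSol = f1 := funext fun ρ => (hfSol ρ).deriv
  have hddf : ∀ ρ : ℝ, deriv (deriv fSol) ρ = f2 ρ := by
    intro ρ; rw [hdf]; exact (hf1 ρ).deriv
  refine ⟨?_, ?_, ?_⟩
  · intro ρ hρ
    obtain ⟨hρ0, hρ1⟩ := hρ
    have h0 : ρ ≠ 0 := ne_of_gt hρ0
    rw [hddf, hdf]
    unfold f1 f2 Vt fSol
    have := hs' ρ
    field_simp
    ring
  · intro ρ hρ
    obtain ⟨hρ0, hρ1⟩ := hρ
    have h0 : ρ ≠ 0 := ne_of_gt hρ0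
    have h1 : (1:ℝ) - ρ ≠ 0 := by linarith
    have h2 : (1:ℝ) + ρ ≠ 0 := by linarith
    have hev : deriv gSol =ᶠ[nhds ρ] g1 := by
      filter_upwards [isOpen_Ioo.mem_nhds (show ρ ∈ Set.Ioo (0:ℝ) 1 from ⟨hρ0, hρ1⟩)] with x hx
      have hx1 : (1:ℝ) - x ≠ 0 := by have := hx.2; linarith
      have hx2 : (1:ℝ) + x ≠ 0 := by have := hx.1; linarith
      exact (hgSol x hx1 hx2 (ne_of_gt hx.1)).deriv
    have hdg : deriv gSol ρ = g1 ρ := (hgSol ρ h1 h2 h0).deriv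
    have hddg : deriv (deriv gSol) ρ = g2 ρ := by
      rw [hev.deriv_eq]; exact (hg1 ρ h1 h2 h0).deriv
    rw [hddg, hdg]
    unfold g1 g2 NN NN1 NN2 DD DD1 DD2 Vt gSol
    have := hs' ρ
    field_simp
    ring
  · intro ρ hρ
    obtain ⟨hρ0, hρ1⟩ := hρ
    have h0 : ρ ≠ 0 := ne_of_gt hρ0
    have h1 : (1:ℝ) - ρ ≠ 0 := by linarith
    have h2 : (1:ℝ) + ρ ≠ 0 := by linarith
    have h12 : (1:ℝ) - ρ ^ 2 ≠ 0 := by nlinarith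
    rw [hdf, (hgSol ρ h1 h2 h0).deriv]
    unfold f1 fSol g1 NN NN1 DD DD1 gSol
    have := hs' ρ
    field_simp
    ring
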